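/- arXiv:2602.23111 — 3 statements merged into one kernel-verified Lean document; each statement's English description precedes it below -/
import Mathlib

section
/- (Variance bound of RAC) Let X ∈ ℝ^{m×n} and Q₂ ∈ ℝ^{n×r₂} be uniformly sampled from the Stiefel manifold via QR of a Gaussian matrix, and let X̃ = (n/r₂)·XQ₂Q₂ᵀ. Then E[‖X̃ − X‖_F²] ≤ (n/r₂ − 1)·‖X‖_F². -/
open Matrix MeasureTheory ProbabilityTheory

instance matrixMeasurableSpace {a b : Type*} : MeasurableSpace (Matrix a b ℝ) :=
  inferInstanceAs (MeasurableSpace (a → b → ℝ))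

/-- Squared Frobenius norm of a matrix. -/
def frobSq {a b : Type*} [Fintype a] [Fintype b] (M : Matrix a b ℝ) : ℝ :=
  ∑ i, ∑ j, (M i j) ^ 2

noncomputable def projMat {n r : ℕ} (M : Matrix (Fin n) (Fin r) ℝ) : Matrix (Fin n) (Fin n) ℝ :=
  M * (Mᵀ * M)⁻¹ * Mᵀ

theorem projMat_apply {n r : ℕ} (M : Matrix (Fin n) (Fin r) ℝ) (i j : Fin n) :
    projMat M i j = ∑ k, ∑ l, M i k * (Mᵀ * M)⁻¹ k l * M j l := by
  simp only [projMat, Matrix.mul_apply, Finset.sum_mul, Matrix.transpose_apply]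
  rw [Finset.sum_comm]

theorem projMat_qr {n r : ℕ} (Q : Matrix (Fin n) (Fin r) ℝ) (R : Matrix (Fin r) (Fin r) ℝ)
    (hQ : Qᵀ * Q = 1) (htri : ∀ i j : Fin r, j < i → R i j = 0) (hpos : ∀ i, 0 < R i i) :
    projMat (Q * R) = Q * Qᵀ := by
  have hbt : R.BlockTriangular id := fun i j h => htri i j h
  have hdet : IsUnit R.det := by
    rw [Matrix.det_of_upperTriangular hbt]
    exact (Finset.prod_pos fun i _ => hpos i).ne'.isUnit
  have hdetT : IsUnit Rᵀ.det := by rwa [Matrix.det_transpose]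
  have h1 : (Q * R)ᵀ * (Q * R) = Rᵀ * R := by
    rw [Matrix.transpose_mul, Matrix.mul_assoc, ← Matrix.mul_assoc Qᵀ, hQ, Matrix.one_mul]
  unfold projMat
  rw [h1, Matrix.mul_inv_rev, Matrix.transpose_mul]
  calc Q * R * (R⁻¹ * Rᵀ⁻¹) * (Rᵀ * Qᵀ)
      = Q * (R * R⁻¹) * (Rᵀ⁻¹ * Rᵀ) * Qᵀ := by
        simp only [Matrix.mul_assoc]
    _ = Q * Qᵀ := by
        rw [Matrix.mul_nonsing_inv _ hdet, Matrix.nonsing_inv_mul _ hdetT, Matrix.mul_one,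
          Matrix.mul_one]

theorem projMat_sign {n r : ℕ} (d : Fin n → ℝ) (hd : ∀ a, d a * d a = 1)
    (M : Matrix (Fin n) (Fin r) ℝ) (i j : Fin n) :
    projMat (Matrix.of fun a b => d a * M a b) i j = d i * d j * projMat M i j := by
  have hMM : (Matrix.of fun a b => d a * M a b)ᵀ * (Matrix.of fun a b => d a * M a b) = Mᵀ * M := by
    ext k l
    simp only [Matrix.mul_apply, Matrix.transpose_apply, Matrix.of_apply]
    refine Finset.sum_congr rfl fun a _ => ?_
    rw [show d a * M a k * (d a * M a l) = (d a * d a) * (M a k * M a l) by ring, hd a, one_mul]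
  rw [projMat_apply, projMat_apply, hMM, Finset.mul_sum]
  refine Finset.sum_congr rfl fun k _ => ?_
  rw [Finset.mul_sum]
  refine Finset.sum_congr rfl fun l _ => ?_
  simp only [Matrix.of_apply]; ring

theorem projMat_perm {n r : ℕ} (e : Equiv.Perm (Fin n))
    (M : Matrix (Fin n) (Fin r) ℝ) (i j : Fin n) :
    projMat (Matrix.of fun a b => M (e a) b) i j = projMat M (e i) (e j) := by
  have hMM : (Matrix.of fun a b => M (e a) b)ᵀ * (Matrix.of fun a b => M (e a) b) = Mᵀ * M := by
    ext k l
    simp only [Matrix.mul_apply, Matrix.transpose_apply, Matrix.of_apply]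
    exact Fintype.sum_equiv e _ _ fun a => rfl
  rw [projMat_apply, projMat_apply, hMM]
  rfl

theorem idem_entry_bound {n : ℕ} (P : Matrix (Fin n) (Fin n) ℝ)
    (hPP : P * P = P) (hsym : ∀ a b, P b a = P a b) (i j : Fin n) :
    |P i j| ≤ 1 := by
  have hdiag : ∀ a, (P a a) = ∑ k, (P a k) ^ 2 := by
    intro a
    conv_lhs => rw [← hPP]
    simp only [Matrix.mul_apply]
    exact Finset.sum_congr rfl fun k _ => by rw [hsym k a]; ring
  have hii : ∀ a, 0 ≤ P a a ∧ P a a ≤ 1 := by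
    intro a
    have h1 : 0 ≤ P a a := by rw [hdiag a]; positivity
    have h2 : (P a a) ^ 2 ≤ P a a := by
      conv_rhs => rw [hdiag a]
      exact Finset.single_le_sum (f := fun k => (P a k) ^ 2) (fun k _ => sq_nonneg _)
        (Finset.mem_univ a)
    exact ⟨h1, by nlinarith⟩
  have hsq : (P i j) ^ 2 ≤ P i i := by
    rw [hdiag i]
    exact Finset.single_le_sum (f := fun k => (P i k) ^ 2) (fun k _ => sq_nonneg _)
      (Finset.mem_univ j)
  have := (hii i).2
  rw [abs_le]; constructor <;> nlinarith

theorem proj_entry_bound {n r : ℕ} (Q : Matrix (Fin n) (Fin r) ℝ) (hQ : Qᵀ * Q = 1)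
    (i j : Fin n) : |(Q * Qᵀ) i j| ≤ 1 := by
  refine idem_entry_bound _ ?_ ?_ i j
  · rw [Matrix.mul_assoc, ← Matrix.mul_assoc Qᵀ, hQ, Matrix.one_mul]
  · intro a b; simp [Matrix.mul_apply, mul_comm]

theorem proj_trace {n r : ℕ} (Q : Matrix (Fin n) (Fin r) ℝ) (hQ : Qᵀ * Q = 1) :
    ∑ i, (Q * Qᵀ) i i = (r : ℝ) := by
  have : ∑ i, (Q * Qᵀ) i i = Matrix.trace (Q * Qᵀ) := rfl
  rw [this, Matrix.trace_mul_comm, hQ, Matrix.trace_one]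
  simp

theorem measurable_projMat_entry {n r : ℕ} (i j : Fin n) :
    Measurable fun x : (Fin n × Fin r → ℝ) =>
      projMat (Matrix.of fun a b => x (a, b)) i j := by
  have hM : Continuous fun x : (Fin n × Fin r → ℝ) =>
      (Matrix.of fun a b => x (a, b) : Matrix (Fin n) (Fin r) ℝ) :=
    continuous_pi fun a => continuous_pi fun b => continuous_apply _
  have hA : Continuous fun x : (Fin n × Fin r → ℝ) =>
      ((Matrix.of fun a b => x (a, b))ᵀ * (Matrix.of fun a b => x (a, b)) :
        Matrix (Fin r) (Fin r) ℝ) :=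
    hM.matrix_transpose.matrix_mul hM
  have hdetinv : Measurable fun x : (Fin n × Fin r → ℝ) =>
      Ring.inverse (((Matrix.of fun a b => x (a, b))ᵀ * (Matrix.of fun a b => x (a, b)) :
        Matrix (Fin r) (Fin r) ℝ).det) := by
    rw [Ring.inverse_eq_inv']
    exact measurable_inv.comp hA.matrix_det.measurable
  have hinv : ∀ k l : Fin r, Measurable fun x : (Fin n × Fin r → ℝ) =>
      (((Matrix.of fun a b => x (a, b))ᵀ * (Matrix.of fun a b => x (a, b)) :
        Matrix (Fin r) (Fin r) ℝ)⁻¹) k l := by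
    intro k l
    simp only [Matrix.inv_def, Matrix.smul_apply, smul_eq_mul]
    exact hdetinv.mul (hA.matrix_adjugate.matrix_elem k l).measurable
  simp only [projMat_apply]
  refine Finset.measurable_sum _ fun k _ => Finset.measurable_sum _ fun l _ => ?_
  have h1 : Measurable fun x : (Fin n × Fin r → ℝ) => x (i, k) := measurable_pi_apply _
  have h2 : Measurable fun x : (Fin n × Fin r → ℝ) => x (j, l) := measurable_pi_apply _
  exact (h1.mul (hinv k l)).mul h2

theorem projMat_bound {n r : ℕ} (M : Matrix (Fin n) (Fin r) ℝ) (i j : Fin n) :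
    |projMat M i j| ≤ 1 := by
  by_cases h : IsUnit (Mᵀ * M).det
  · refine idem_entry_bound _ ?_ ?_ i j
    · show M * (Mᵀ * M)⁻¹ * Mᵀ * (M * (Mᵀ * M)⁻¹ * Mᵀ) = M * (Mᵀ * M)⁻¹ * Mᵀ
      calc M * (Mᵀ * M)⁻¹ * Mᵀ * (M * (Mᵀ * M)⁻¹ * Mᵀ)
          = M * (Mᵀ * M)⁻¹ * (Mᵀ * M) * ((Mᵀ * M)⁻¹ * Mᵀ) := by
            simp only [Matrix.mul_assoc]
        _ = M * (Mᵀ * M)⁻¹ * Mᵀ := by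
            rw [Matrix.mul_assoc (M * (Mᵀ * M)⁻¹), ← Matrix.mul_assoc (Mᵀ * M),
              Matrix.mul_nonsing_inv _ h, Matrix.one_mul]
    · intro a b
      have hsymM : (projMat M)ᵀ = projMat M := by
        unfold projMat
        rw [Matrix.transpose_mul, Matrix.transpose_mul, Matrix.transpose_transpose,
          Matrix.transpose_nonsing_inv, Matrix.transpose_mul, Matrix.transpose_transpose,
          Matrix.mul_assoc]
      have h2 := congrFun (congrFun hsymM b) a
      rw [Matrix.transpose_apply] at h2
      exact h2.symm
  · unfold projMat
    rw [Matrix.nonsing_inv_apply_not_isUnit _ h, Matrix.mul_zero, Matrix.zero_mul]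
    simp

theorem gauss_map_neg :
    Measure.map (fun t : ℝ => -1 * t) (gaussianReal 0 1) = gaussianReal 0 1 := by
  have := gaussianReal_map_const_mul (μ := 0) (v := 1) (-1)
  simpa using this

theorem pi_map_symm {ι : Type*} [Fintype ι] (ν : Measure ℝ) [IsProbabilityMeasure ν]
    (σ : Equiv.Perm ι) (φ : ι → ℝ → ℝ) (hφm : ∀ p, Measurable (φ p))
    (hφ : ∀ p, Measure.map (φ p) ν = ν) :
    Measure.map (fun (x : ι → ℝ) p => φ p (x (σ p))) (Measure.pi fun _ => ν)
      = Measure.pi fun _ => ν := by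
  have hτ : Measurable fun (x : ι → ℝ) p => φ p (x (σ p)) :=
    measurable_pi_lambda _ fun p => (hφm p).comp (measurable_pi_apply (σ p))
  refine (Measure.pi_eq fun s hs => ?_).symm
  rw [Measure.map_apply hτ (MeasurableSet.univ_pi hs)]
  have hpre : (fun (x : ι → ℝ) p => φ p (x (σ p))) ⁻¹' Set.pi Set.univ s
      = Set.pi Set.univ fun q => φ (σ.symm q) ⁻¹' s (σ.symm q) := by
    ext x
    simp only [Set.mem_preimage, Set.mem_pi, Set.mem_univ, forall_true_left]
    constructor
    · intro h q
      have := h (σ.symm q)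
      simpa using this
    · intro h p
      have := h (σ p)
      simpa using this
  rw [hpre, Measure.pi_pi]
  rw [Fintype.prod_equiv σ.symm _ (fun p => ν (φ p ⁻¹' s p)) (fun q => rfl)]
  refine Finset.prod_congr rfl fun p _ => ?_
  rw [← Measure.map_apply (hφm p) (hs p), hφ p]

/-- Variance bound of RAC: if `Q₂` is uniformly sampled from the Stiefel manifold via
QR of a Gaussian matrix and `X̃ = (n/r₂)·XQ₂Q₂ᵀ`, then
`E[‖X̃ − X‖_F²] ≤ (n/r₂ − 1)·‖X‖_F²`. -/
theorem rac_variance {m n r₂ : ℕ} (hr₂ : r₂ ≤ n) (hr₂pos : 0 < r₂)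
    {Ω : Type*} [MeasurableSpace Ω] (μ : Measure Ω) [IsProbabilityMeasure μ]
    (X : Matrix (Fin m) (Fin n) ℝ)
    (S : Ω → Matrix (Fin n) (Fin r₂) ℝ)
    (hGauss : ∀ i j, Measure.map (fun ω => S ω i j) μ = gaussianReal 0 1)
    (hIndep : iIndepFun
      (fun (p : Fin n × Fin r₂) ω => S ω p.1 p.2) μ)
    (Q₂ : Ω → Matrix (Fin n) (Fin r₂) ℝ) (R : Ω → Matrix (Fin r₂) (Fin r₂) ℝ)
    (hQ₂meas : Measurable Q₂)
    -- `Q₂` is the orthonormal factor of the thin QR decomposition of `S`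
    (hQR : ∀ ω, (Q₂ ω)ᵀ * Q₂ ω = 1 ∧
      (∀ i j : Fin r₂, j < i → R ω i j = 0) ∧ (∀ i : Fin r₂, 0 < R ω i i) ∧
      S ω = Q₂ ω * R ω)
    (Xtil : Ω → Matrix (Fin m) (Fin n) ℝ)
    (hXtil : ∀ ω, Xtil ω = ((n : ℝ) / r₂) • (X * Q₂ ω * (Q₂ ω)ᵀ)) :
    ∫ ω, frobSq (Xtil ω - X) ∂μ ≤ ((n : ℝ) / r₂ - 1) * frobSq X := by
  classical
  have hn : 0 < n := lt_of_lt_of_le hr₂pos hr₂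
  have hnR : (0 : ℝ) < n := by exact_mod_cast hn
  have hrR : (0 : ℝ) < r₂ := by exact_mod_cast hr₂pos
  set c : ℝ := (n : ℝ) / r₂ with hc
  set P : Ω → Matrix (Fin n) (Fin n) ℝ := fun ω => Q₂ ω * (Q₂ ω)ᵀ with hPdef
  -- P is the projection associated with S
  have hPproj : ∀ ω, P ω = projMat (S ω) := by
    intro ω
    rw [(hQR ω).2.2.2, projMat_qr _ _ (hQR ω).1 (hQR ω).2.1 (hQR ω).2.2.1]
  -- measurability and integrability of entries of P
  have hQentry : ∀ (a : Fin n) (b : Fin r₂), Measurable fun ω => Q₂ ω a b := fun a b =>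
    (measurable_pi_apply b).comp ((measurable_pi_apply a).comp hQ₂meas)
  have hPmeas : ∀ k b, Measurable fun ω => P ω k b := by
    intro k b
    simp only [hPdef, Matrix.mul_apply, Matrix.transpose_apply]
    exact Finset.measurable_sum _ fun l _ => (hQentry k l).mul (hQentry b l)
  have hPbd : ∀ ω k b, |P ω k b| ≤ 1 := fun ω k b =>
    proj_entry_bound (Q₂ ω) (hQR ω).1 k b
  have hPint : ∀ k b, Integrable (fun ω => P ω k b) μ := by
    intro k b
    refine Integrable.mono' (integrable_const 1) (hPmeas k b).aestronglyMeasurable ?_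
    exact Filter.Eventually.of_forall fun ω => by simpa using hPbd ω k b
  -- the coordinate process
  set T : Ω → (Fin n × Fin r₂ → ℝ) := fun ω p => S ω p.1 p.2 with hTdef
  have hae : ∀ p : Fin n × Fin r₂, AEMeasurable (fun ω => T ω p) μ := by
    intro p
    refine aemeasurable_of_map_neZero ⟨?_⟩
    show Measure.map (fun ω => S ω p.1 p.2) μ ≠ 0
    rw [hGauss p.1 p.2]
    exact IsProbabilityMeasure.ne_zero _
  have hTae : AEMeasurable T μ := by
    refine ⟨fun ω p => (hae p).mk _ ω,
      measurable_pi_lambda _ fun p => (hae p).measurable_mk, ?_⟩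
    have h : ∀ᵐ ω ∂μ, ∀ p, T ω p = (hae p).mk _ ω :=
      (MeasureTheory.ae_all_iff).2 fun p => (hae p).ae_eq_mk
    filter_upwards [h] with ω hω
    exact funext hω
  set π : Measure (Fin n × Fin r₂ → ℝ) := Measure.pi fun _ => gaussianReal 0 1 with hπdef
  -- the joint law of S is the Gaussian product measure
  have hmapT : Measure.map T μ = π := by
    refine (Measure.pi_eq fun s hs => ?_).symm
    rw [Measure.map_apply_of_aemeasurable hTae (MeasurableSet.univ_pi hs)]
    have hpre : T ⁻¹' Set.pi Set.univ s
        = ⋂ p ∈ (Finset.univ : Finset (Fin n × Fin r₂)), (fun ω => S ω p.1 p.2) ⁻¹' s p := by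
      ext ω
      simp [hTdef, Set.mem_pi]
    rw [hpre, iIndepFun_iff_measure_inter_preimage_eq_mul.mp hIndep Finset.univ
      (fun p _ => hs p)]
    refine Finset.prod_congr rfl fun p _ => ?_
    rw [← hGauss p.1 p.2, Measure.map_apply_of_aemeasurable (hae p) (hs p)]
  -- entries of the projection as functions of the coordinates
  set g : Fin n → Fin n → (Fin n × Fin r₂ → ℝ) → ℝ :=
    fun i j x => projMat (Matrix.of fun a b => x (a, b)) i j with hgdef
  have hgmeas : ∀ i j, Measurable (g i j) := fun i j => measurable_projMat_entry i j
  have hPg : ∀ ω i j, P ω i j = g i j (T ω) := by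
    intro ω i j
    rw [hPproj ω]
    rfl
  have hI : ∀ i j, ∫ ω, P ω i j ∂μ = ∫ x, g i j x ∂π := by
    intro i j
    simp_rw [hPg]
    rw [← hmapT, integral_map hTae (hgmeas i j).aestronglyMeasurable]
  -- off-diagonal expectations vanish
  have hoff : ∀ i j : Fin n, i ≠ j → ∫ x, g i j x ∂π = 0 := by
    intro i j hij
    set d : Fin n → ℝ := fun a => if a = i then -1 else 1 with hddef
    have hd : ∀ a, d a * d a = 1 := by
      intro a; simp only [hddef]; split_ifs <;> norm_num
    set τ : (Fin n × Fin r₂ → ℝ) → (Fin n × Fin r₂ → ℝ) := fun x p => d p.1 * x p with hτdef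
    have hτm : Measurable τ :=
      measurable_pi_lambda _ fun p => (measurable_pi_apply p).const_mul _
    have hτπ : Measure.map τ π = π := by
      have := pi_map_symm (ι := Fin n × Fin r₂) (gaussianReal 0 1) (Equiv.refl _)
        (fun p t => d p.1 * t) (fun p => measurable_id.const_mul _) ?_
      · exact this
      · intro p
        by_cases h : p.1 = i
        · simp only [hddef, h, if_pos rfl]
          exact gauss_map_neg
        · simp only [hddef, if_neg h, one_mul]
          exact Measure.map_id
    have hgτ : ∀ x, g i j (τ x) = - g i j x := by
      intro x
      have : g i j (τ x) = d i * d j * g i j x :=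
        projMat_sign d hd (Matrix.of fun a b => x (a, b)) i j
      rw [this]
      have hdi : d i = -1 := by simp [hddef]
      have hdj : d j = 1 := by simp [hddef, Ne.symm hij]
      rw [hdi, hdj]; ring
    have h1 : ∫ x, g i j x ∂π = ∫ x, g i j (τ x) ∂π := by
      conv_lhs => rw [← hτπ]
      rw [integral_map hτm.aemeasurable]
      rw [hτπ]
      exact (hgmeas i j).aestronglyMeasurable
    have h2 : ∫ x, g i j (τ x) ∂π = - ∫ x, g i j x ∂π := by
      simp_rw [hgτ]
      exact integral_neg _
    linarith [h1, h2]
  -- diagonal expectations are all equal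
  have hdiageq : ∀ i j : Fin n, ∫ x, g i i x ∂π = ∫ x, g j j x ∂π := by
    intro i j
    set e : Equiv.Perm (Fin n) := Equiv.swap i j with hedef
    set σ : Equiv.Perm (Fin n × Fin r₂) := e.prodCongr (Equiv.refl (Fin r₂)) with hσdef
    set τ : (Fin n × Fin r₂ → ℝ) → (Fin n × Fin r₂ → ℝ) := fun x p => x (σ p) with hτdef
    have hτm : Measurable τ := measurable_pi_lambda _ fun p => measurable_pi_apply _
    have hτπ : Measure.map τ π = π := by
      have := pi_map_symm (ι := Fin n × Fin r₂) (gaussianReal 0 1) σ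
        (fun _ t => t) (fun _ => measurable_id) (fun _ => Measure.map_id)
      exact this
    have hgτ : ∀ x, g i i (τ x) = g j j x := by
      intro x
      have h1 : g i i (τ x)
          = projMat (Matrix.of fun a b => (Matrix.of fun a' b' => x (a', b')) (e a) b) i i := rfl
      rw [h1, projMat_perm e _ i i]
      have : e i = j := Equiv.swap_apply_left i j
      rw [this]
    calc ∫ x, g i i x ∂π = ∫ x, g i i (τ x) ∂π := by
          conv_lhs => rw [← hτπ]
          rw [integral_map hτm.aemeasurable]
          rw [hτπ]
          exact (hgmeas i i).aestronglyMeasurable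
      _ = ∫ x, g j j x ∂π := by simp_rw [hgτ]
  -- value of the diagonal expectation
  have hdiagsum : ∑ i : Fin n, ∫ ω, P ω i i ∂μ = (r₂ : ℝ) := by
    rw [← integral_finset_sum _ (fun i _ => hPint i i)]
    have : ∀ ω, ∑ i : Fin n, P ω i i = (r₂ : ℝ) := fun ω => proj_trace (Q₂ ω) (hQR ω).1
    simp_rw [this]
    simp
  have hdiagval : ∀ i : Fin n, ∫ ω, P ω i i ∂μ = (r₂ : ℝ) / n := by
    intro i
    have hall : ∀ j : Fin n, ∫ ω, P ω j j ∂μ = ∫ ω, P ω i i ∂μ := by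
      intro j
      rw [hI j j, hI i i, hdiageq j i]
    have : ∑ j : Fin n, ∫ ω, P ω j j ∂μ = n * ∫ ω, P ω i i ∂μ := by
      rw [Finset.sum_congr rfl fun j _ => hall j]
      simp [mul_comm]
    rw [this] at hdiagsum
    rw [eq_div_iff hnR.ne']
    linarith [hdiagsum]
  have hoffval : ∀ i j : Fin n, i ≠ j → ∫ ω, P ω i j ∂μ = 0 := by
    intro i j hij
    rw [hI i j, hoff i j hij]
  -- pointwise expansion of the squared error
  set A : Matrix (Fin n) (Fin n) ℝ := Xᵀ * X with hAdef
  set W : Ω → ℝ := fun ω => ∑ k, ∑ b, A k b * P ω k b with hWdef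
  have key : ∀ ω, frobSq (Xtil ω - X) = (c ^ 2 - 2 * c) * W ω + frobSq X := by
    intro ω
    have hQo := (hQR ω).1
    have hPP : P ω * P ω = P ω := by
      rw [hPdef]
      show Q₂ ω * (Q₂ ω)ᵀ * (Q₂ ω * (Q₂ ω)ᵀ) = Q₂ ω * (Q₂ ω)ᵀ
      rw [Matrix.mul_assoc, ← Matrix.mul_assoc (Q₂ ω)ᵀ, hQo, Matrix.one_mul]
    have hPsym : ∀ a b, P ω b a = P ω a b := by
      intro a b; simp [hPdef, Matrix.mul_apply, mul_comm]
    set B : Matrix (Fin m) (Fin n) ℝ := X * P ω with hBdef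
    have hXt : Xtil ω = c • B := by
      rw [hXtil ω, hBdef, hPdef, Matrix.mul_assoc]
    have hentry : ∀ a b, (Xtil ω - X) a b = c * B a b - X a b := by
      intro a b
      rw [hXt]
      simp [Matrix.sub_apply, Matrix.smul_apply, smul_eq_mul]
    have hS1S2 : ∑ a, ∑ b, B a b * B a b = ∑ a, ∑ b, B a b * X a b := by
      have hPt : (P ω)ᵀ = P ω := by
        ext a b; rw [Matrix.transpose_apply]; exact hPsym a b
      have hmat : B * Bᵀ = B * Xᵀ := by
        have hBt : Bᵀ = P ω * Xᵀ := by rw [hBdef, Matrix.transpose_mul, hPt]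
        rw [hBt, hBdef, ← Matrix.mul_assoc (X * P ω) (P ω) Xᵀ,
          Matrix.mul_assoc X (P ω) (P ω), hPP]
      have h1 : ∀ a : Fin m, ∑ b, B a b * B a b = (B * Bᵀ) a a := by
        intro a; simp [Matrix.mul_apply, Matrix.transpose_apply]
      have h2 : ∀ a : Fin m, ∑ b, B a b * X a b = (B * Xᵀ) a a := by
        intro a; simp [Matrix.mul_apply, Matrix.transpose_apply]
      simp_rw [h1, h2, hmat]
    have hS2W : ∑ a, ∑ b, B a b * X a b = W ω := by
      rw [hWdef]
      simp only [hBdef, hAdef, Matrix.mul_apply, Matrix.transpose_apply, Finset.sum_mul]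
      rw [Finset.sum_comm]
      refine Finset.sum_congr rfl fun k _ => ?_
      rw [Finset.sum_comm]
      refine Finset.sum_congr rfl fun b _ => ?_
      refine Finset.sum_congr rfl fun a _ => ?_
      rw [hPsym k b]; ring
    have hexp : frobSq (Xtil ω - X)
        = c ^ 2 * (∑ a, ∑ b, B a b * B a b) - 2 * c * (∑ a, ∑ b, B a b * X a b)
          + frobSq X := by
      unfold frobSq
      simp_rw [hentry,
        show ∀ a b, (c * B a b - X a b) ^ 2
          = c ^ 2 * (B a b * B a b) - 2 * c * (B a b * X a b) + (X a b) ^ 2 from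
          fun a b => by ring,
        Finset.sum_add_distrib, Finset.sum_sub_distrib, ← Finset.mul_sum]
    rw [hexp, hS1S2, hS2W]
    ring
  -- integrate
  have hWint : Integrable W μ := by
    rw [hWdef]
    refine integrable_finset_sum _ fun k _ => integrable_finset_sum _ fun b _ => ?_
    exact (hPint k b).const_mul _
  have hWval : ∫ ω, W ω ∂μ = (r₂ : ℝ) / n * frobSq X := by
    rw [hWdef]
    beta_reduce
    rw [integral_finset_sum (f := fun k ω => ∑ b, A k b * P ω k b) _ fun k _ => integrable_finset_sum _ fun b _ =>
      (hPint k b).const_mul _]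
    have hkint : ∀ k : Fin n, ∫ ω, ∑ b, A k b * P ω k b ∂μ = A k k * ((r₂ : ℝ) / n) := by
      intro k
      rw [integral_finset_sum (f := fun b ω => A k b * P ω k b) _ fun b _ => (hPint k b).const_mul _]
      have : ∀ b : Fin n, ∫ ω, A k b * P ω k b ∂μ = if b = k then A k k * ((r₂ : ℝ) / n)
          else 0 := by
        intro b
        rw [integral_const_mul]
        by_cases hbk : b = k
        · subst hbk
          rw [hdiagval b, if_pos rfl]
        · rw [hoffval k b (Ne.symm hbk), mul_zero, if_neg hbk]
      simp_rw [this]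
      simp
    simp_rw [hkint]
    rw [← Finset.sum_mul]
    have htrA : ∑ k, A k k = frobSq X := by
      simp only [hAdef, Matrix.mul_apply, Matrix.transpose_apply]
      unfold frobSq
      rw [Finset.sum_comm]
      refine Finset.sum_congr rfl fun a _ => Finset.sum_congr rfl fun k _ => ?_
      ring
    rw [htrA]
    ring
  have hfinal : ∫ ω, frobSq (Xtil ω - X) ∂μ
      = (c ^ 2 - 2 * c) * ((r₂ : ℝ) / n * frobSq X) + frobSq X := by
    simp_rw [key]
    rw [integral_add (hWint.const_mul _) (integrable_const _), integral_const_mul,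
      integral_const, hWval]
    simp
  rw [hfinal, hc]
  have : ((↑n / ↑r₂ : ℝ) ^ 2 - 2 * (↑n / ↑r₂)) * (↑r₂ / ↑n * frobSq X) + frobSq X
      = (↑n / ↑r₂ - 1) * frobSq X := by
    field_simp
    ring
  rw [this]
end

section
/- (Lower bound for unbiased subspace compression) Let n > r > s ≥ 0 and q > 0. Consider diagonal matrices X = diag(σ₁,…,σₙ) with σ₁ ≥ … ≥ σₙ > 0 and Σ_{i=s+1}^n σᵢ² ≤ q. For each such X, consider random matrices P ∈ ℝ^{n×r} drawn from any distribution satisfying the unbiasedness condition E[XPPᵀ] = X. Then the minimax quantity sup_X inf_P E[‖XPPᵀ − X‖_F²] is at least ((n−s)/(r−s) − 1)·q. -/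
open Matrix MeasureTheory

lemma frobSq_nonneg {a b : Type*} [Fintype a] [Fintype b] (M : Matrix a b ℝ) :
    0 ≤ frobSq M :=
  Finset.sum_nonneg fun _ _ => Finset.sum_nonneg fun _ _ => sq_nonneg _

lemma frobSq_transpose {a b : Type*} [Fintype a] [Fintype b] (M : Matrix a b ℝ) :
    frobSq Mᵀ = frobSq M := by
  rw [frobSq, frobSq, Finset.sum_comm]; rfl

lemma frobSq_eq_trace {a b : Type*} [Fintype a] [Fintype b] (M : Matrix a b ℝ) :
    frobSq M = Matrix.trace (M * Mᵀ) := by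
  simp [frobSq, Matrix.trace, Matrix.mul_apply, Matrix.diag, sq]

-- Cauchy-Schwarz for the trace pairing
lemma trace_mul_le {a b : Type*} [Fintype a] [Fintype b] (M : Matrix a b ℝ) (N : Matrix b a ℝ) :
    Matrix.trace (M * N) ≤ Real.sqrt (frobSq M) * Real.sqrt (frobSq N) := by
  have h1 : Matrix.trace (M * N) = ∑ p : a × b, M p.1 p.2 * N p.2 p.1 := by
    rw [Fintype.sum_prod_type]
    simp [Matrix.trace, Matrix.mul_apply, Matrix.diag]
  have h2 : (∑ p : a × b, M p.1 p.2 * N p.2 p.1)^2 ≤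
      (∑ p : a × b, (M p.1 p.2)^2) * (∑ p : a × b, (N p.2 p.1)^2) :=
    Finset.sum_mul_sq_le_sq_mul_sq _ _ _
  have h3 : (∑ p : a × b, (M p.1 p.2)^2) = frobSq M := by
    rw [Fintype.sum_prod_type]; rfl
  have h4 : (∑ p : a × b, (N p.2 p.1)^2) = frobSq N := by
    rw [Fintype.sum_prod_type, frobSq, Finset.sum_comm]
  calc Matrix.trace (M * N) ≤ Real.sqrt ((Matrix.trace (M * N))^2) := by
        rw [Real.sqrt_sq_eq_abs]; exact le_abs_self _
    _ ≤ Real.sqrt ((∑ p : a × b, (M p.1 p.2)^2) * (∑ p : a × b, (N p.2 p.1)^2)) := by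
        apply Real.sqrt_le_sqrt; rw [h1]; exact h2
    _ = Real.sqrt (frobSq M) * Real.sqrt (frobSq N) := by
        rw [h3, h4, Real.sqrt_mul (frobSq_nonneg M)]

-- quadratic form bounded by frobenius norm
lemma qf_abs_le {k : Type*} [Fintype k] (D : Matrix k k ℝ) (x : k → ℝ) :
    |x ⬝ᵥ (D *ᵥ x)| ≤ Real.sqrt (frobSq D) * (x ⬝ᵥ x) := by
  have h1 : x ⬝ᵥ (D *ᵥ x) = ∑ p : k × k, D p.1 p.2 * (x p.1 * x p.2) := by
    rw [Fintype.sum_prod_type]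
    simp [dotProduct, Matrix.mulVec, Finset.mul_sum, mul_comm, mul_left_comm, mul_assoc]
  have h2 := Finset.sum_mul_sq_le_sq_mul_sq Finset.univ
    (fun p : k × k => D p.1 p.2) (fun p : k × k => x p.1 * x p.2)
  have h3 : (∑ p : k × k, (D p.1 p.2)^2) = frobSq D := by
    rw [Fintype.sum_prod_type]; rfl
  have h4 : (∑ p : k × k, (x p.1 * x p.2)^2) = (x ⬝ᵥ x)^2 := by
    rw [Fintype.sum_prod_type]
    simp [dotProduct, sq, Finset.sum_mul_sum, mul_pow, Finset.mul_sum, mul_comm, mul_left_comm]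
  have h5 : |x ⬝ᵥ (D *ᵥ x)| = Real.sqrt ((x ⬝ᵥ (D *ᵥ x))^2) := (Real.sqrt_sq_eq_abs _).symm
  rw [h5, h1]
  calc Real.sqrt ((∑ p : k × k, D p.1 p.2 * (x p.1 * x p.2))^2)
      ≤ Real.sqrt (frobSq D * (x ⬝ᵥ x)^2) := by
        apply Real.sqrt_le_sqrt; rw [← h3, ← h4]
        simpa using h2
    _ = Real.sqrt (frobSq D) * (x ⬝ᵥ x) := by
        rw [Real.sqrt_mul (frobSq_nonneg D), Real.sqrt_sq (by exact Finset.sum_nonneg fun i _ => mul_self_nonneg _ : (0:ℝ) ≤ x ⬝ᵥ x)]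

lemma dot_self_nonneg {k : Type*} [Fintype k] (x : k → ℝ) : (0:ℝ) ≤ x ⬝ᵥ x :=
  Finset.sum_nonneg fun i _ => mul_self_nonneg _

section core
variable {α γ : Type*} [Fintype α] [Fintype γ] [DecidableEq α] [DecidableEq γ]

-- lower bound for the Gram quadratic form
lemma gram_qf_lb (H : Matrix α γ ℝ) (hA : frobSq (H * Hᵀ - 1) ≤ 1/4) (x : α → ℝ) :
    (x ⬝ᵥ x) / 2 ≤ x ⬝ᵥ ((H * Hᵀ) *ᵥ x) := by
  have hD := qf_abs_le (H * Hᵀ - 1) x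
  have hs : Real.sqrt (frobSq (H * Hᵀ - 1)) ≤ 1/2 := by
    rw [show (1:ℝ)/2 = Real.sqrt (1/4) by
      rw [show (1:ℝ)/4 = (1/2)^2 by norm_num, Real.sqrt_sq (by norm_num)]]
    exact Real.sqrt_le_sqrt hA
  have hxx := dot_self_nonneg x
  have h1 : x ⬝ᵥ ((H * Hᵀ - 1) *ᵥ x) = x ⬝ᵥ ((H * Hᵀ) *ᵥ x) - x ⬝ᵥ x := by
    rw [Matrix.sub_mulVec, dotProduct_sub, Matrix.one_mulVec]
  have h2 : |x ⬝ᵥ ((H * Hᵀ - 1) *ᵥ x)| ≤ (1/2) * (x ⬝ᵥ x) := by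
    refine hD.trans ?_
    exact mul_le_mul_of_nonneg_right hs hxx
  rw [h1] at h2
  have := abs_le.mp h2
  linarith [this.1]

lemma gram_posdef (H : Matrix α γ ℝ) (hA : frobSq (H * Hᵀ - 1) ≤ 1/4) :
    (H * Hᵀ).PosDef := by
  refine Matrix.posDef_iff_dotProduct_mulVec.mpr ⟨?_, ?_⟩
  · exact Matrix.isHermitian_mul_conjTranspose_self H
  · intro x hx
    have h1 := gram_qf_lb H hA x
    have h2 : 0 < x ⬝ᵥ x := by
      rcases Function.ne_iff.mp hx with ⟨i, hi⟩
      have : (0:ℝ) < x i * x i := mul_self_pos.mpr hi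
      have : x i * x i ≤ x ⬝ᵥ x :=
        Finset.single_le_sum (fun j _ => mul_self_nonneg (x j)) (Finset.mem_univ i)
      · linarith [mul_self_pos.mpr hi]
    simpa using lt_of_lt_of_le (by linarith : (0:ℝ) < (x ⬝ᵥ x)/2) h1

-- quadratic form of the inverse is bounded
lemma gram_inv_qf (H : Matrix α γ ℝ) (hA : frobSq (H * Hᵀ - 1) ≤ 1/4) (x : α → ℝ) :
    x ⬝ᵥ ((H * Hᵀ)⁻¹ *ᵥ x) ≤ 2 * (x ⬝ᵥ x) := by
  set A := H * Hᵀ with hAdef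
  have hdet : IsUnit A.det := (gram_posdef H hA).det_pos.ne'.isUnit
  have hAinv : A * A⁻¹ = 1 := Matrix.mul_nonsing_inv A hdet
  set y := A⁻¹ *ᵥ x with hy
  have hxy : A *ᵥ y = x := by
    rw [hy, Matrix.mulVec_mulVec, hAinv, Matrix.one_mulVec]
  -- c := x ⬝ᵥ y = y ⬝ᵥ A y
  have hsymm : Aᵀ = A := (Matrix.isHermitian_mul_conjTranspose_self H).eq
  have hc : x ⬝ᵥ y = y ⬝ᵥ (A *ᵥ y) := by
    rw [dotProduct_comm, ← hxy]
  have hc0 : (y ⬝ᵥ y) / 2 ≤ y ⬝ᵥ (A *ᵥ y) := gram_qf_lb H hA y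
  have hyy := dot_self_nonneg y
  have hxx := dot_self_nonneg x
  have hCS : (y ⬝ᵥ x)^2 ≤ (y ⬝ᵥ y) * (x ⬝ᵥ x) := by
    simpa [dotProduct, sq, Finset.sum_mul_sum, mul_pow] using
      Finset.sum_mul_sq_le_sq_mul_sq Finset.univ y x
  have hcy : y ⬝ᵥ x = x ⬝ᵥ y := dotProduct_comm y x
  set c := x ⬝ᵥ y with hcdef
  have hcnn : 0 ≤ c := by rw [hc]; linarith
  have hkey : c^2 ≤ 2 * c * (x ⬝ᵥ x) := by
    calc c^2 = (y ⬝ᵥ x)^2 := by rw [hcy]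
      _ ≤ (y ⬝ᵥ y) * (x ⬝ᵥ x) := hCS
      _ ≤ (2 * c) * (x ⬝ᵥ x) := by
          apply mul_le_mul_of_nonneg_right _ hxx
          linarith [hc0, hc, hcdef]
  rcases eq_or_lt_of_le hcnn with h0 | h0
  · linarith
  · have := (mul_le_mul_iff_left₀ h0).mp (by nlinarith : c * c ≤ (2 * (x ⬝ᵥ x)) * c)
    linarith

end core

section core2
variable {α γ β : Type*} [Fintype α] [Fintype γ] [Fintype β] [DecidableEq α] [DecidableEq γ]

lemma det_core (H : Matrix α γ ℝ) (T : Matrix β γ ℝ)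
    (hA : frobSq (H * Hᵀ - 1) + frobSq (T * Hᵀ) ≤ 1/4) :
    Matrix.trace (T * Tᵀ) ≤
      Real.sqrt ((Fintype.card γ : ℝ) - Fintype.card α) * Real.sqrt (frobSq (T * Tᵀ))
        + 2 * frobSq (T * Hᵀ) := by
  have hA1 : frobSq (H * Hᵀ - 1) ≤ 1/4 := by
    have := frobSq_nonneg (T * Hᵀ); linarith
  set A := H * Hᵀ with hAdef
  set B := T * Hᵀ with hBdef
  have hdet : IsUnit A.det := (gram_posdef H hA1).det_pos.ne'.isUnit
  have hAA : A⁻¹ * A = 1 := Matrix.nonsing_inv_mul A hdet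
  have hAA' : A * A⁻¹ = 1 := Matrix.mul_nonsing_inv A hdet
  have hsymm : Aᵀ = A := (Matrix.isHermitian_mul_conjTranspose_self H).eq
  have hinvsymm : (A⁻¹)ᵀ = A⁻¹ := by rw [Matrix.transpose_nonsing_inv, hsymm]
  set N : Matrix γ γ ℝ := Hᵀ * A⁻¹ * H with hNdef
  set Pp : Matrix γ γ ℝ := 1 - N with hPidef
  -- N is idempotent
  have hNN : N * N = N := by
    calc N * N = Hᵀ * A⁻¹ * (H * Hᵀ) * (A⁻¹ * H) := by
          simp only [hNdef, Matrix.mul_assoc]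
      _ = Hᵀ * (A⁻¹ * (A * (A⁻¹ * H))) := by rw [← hAdef]; simp only [Matrix.mul_assoc]
      _ = N := by rw [← Matrix.mul_assoc A, hAA', Matrix.one_mul, hNdef, Matrix.mul_assoc]
  have hPiPi : Pp * Pp = Pp := by
    rw [hPidef]
    simp only [Matrix.sub_mul, Matrix.mul_sub, Matrix.one_mul, Matrix.mul_one, hNN]
    abel
  have hPiT : Ppᵀ = Pp := by
    rw [hPidef, Matrix.transpose_sub, Matrix.transpose_one, hNdef,
      Matrix.transpose_mul, Matrix.transpose_mul, Matrix.transpose_transpose, hinvsymm]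
    rw [Matrix.mul_assoc]
  -- trace of Pp
  have htrN : Matrix.trace N = (Fintype.card α : ℝ) := by
    rw [hNdef, Matrix.trace_mul_comm, ← Matrix.mul_assoc, ← hAdef, hAA', Matrix.trace_one]
  have htrPi : Matrix.trace Pp = (Fintype.card γ : ℝ) - Fintype.card α := by
    rw [hPidef, Matrix.trace_sub, Matrix.trace_one, htrN]
  have hfrobPi : frobSq Pp = (Fintype.card γ : ℝ) - Fintype.card α := by
    rw [frobSq_eq_trace, hPiT, hPiPi, htrPi]
  -- the B A⁻¹ Bᵀ term
  have hBAB : ∀ j : β, (B * A⁻¹ * Bᵀ) j j ≤ 2 * ∑ a, (B j a)^2 := by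
    intro j
    have h1 : (B * A⁻¹ * Bᵀ) j j = (fun a => B j a) ⬝ᵥ (A⁻¹ *ᵥ (fun a => B j a)) := by
      simp only [Matrix.mul_apply, Matrix.transpose_apply, dotProduct, Matrix.mulVec,
        Finset.sum_mul, Finset.mul_sum]
      rw [Finset.sum_comm]
      apply Finset.sum_congr rfl; intro a _
      apply Finset.sum_congr rfl; intro b _
      ring
    rw [h1]
    have h2 := gram_inv_qf H hA1 (fun a => B j a)
    rw [← hAdef] at h2
    refine h2.trans ?_
    have : (fun a => B j a) ⬝ᵥ (fun a => B j a) = ∑ a, (B j a)^2 := by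
      simp [dotProduct, sq]
    rw [this]
  have htrBAB : Matrix.trace (B * A⁻¹ * Bᵀ) ≤ 2 * frobSq B := by
    rw [Matrix.trace, frobSq, Finset.mul_sum]
    exact Finset.sum_le_sum fun j _ => hBAB j
  have htrBAB0 : Matrix.trace (Tᵀ * T * N) = Matrix.trace (B * A⁻¹ * Bᵀ) := by
    have hBT : Bᵀ = H * Tᵀ := by rw [hBdef, Matrix.transpose_mul, Matrix.transpose_transpose]
    rw [hNdef, Matrix.trace_mul_comm]
    rw [hBdef, hBT]
    simp only [Matrix.mul_assoc]
    conv_rhs => rw [Matrix.trace_mul_comm]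
    simp only [Matrix.mul_assoc]
  -- decomposition of trace
  have hdecomp : Matrix.trace (Tᵀ * T) =
      Matrix.trace (Tᵀ * T * Pp) + Matrix.trace (B * A⁻¹ * Bᵀ) := by
    rw [hPidef, Matrix.mul_sub, Matrix.mul_one, Matrix.trace_sub, htrBAB0]
    ring
  -- Cauchy-Schwarz
  have hCS : Matrix.trace (Tᵀ * T * Pp) ≤
      Real.sqrt (frobSq (Tᵀ * T)) * Real.sqrt (frobSq Pp) :=
    trace_mul_le (Tᵀ * T) Pp
  -- frobSq (TᵀT) = frobSq (TTᵀ)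
  have hfrobT : frobSq (Tᵀ * T) = frobSq (T * Tᵀ) := by
    rw [frobSq_eq_trace, frobSq_eq_trace]
    have e1 : (Tᵀ * T)ᵀ = Tᵀ * T := by rw [Matrix.transpose_mul, Matrix.transpose_transpose]
    have e2 : (T * Tᵀ)ᵀ = T * Tᵀ := by rw [Matrix.transpose_mul, Matrix.transpose_transpose]
    rw [e1, e2]
    calc ((Tᵀ * T) * (Tᵀ * T)).trace = (Tᵀ * (T * (Tᵀ * T))).trace := by
          simp only [Matrix.mul_assoc]
      _ = ((T * (Tᵀ * T)) * Tᵀ).trace := by rw [Matrix.trace_mul_comm]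
      _ = ((T * Tᵀ) * (T * Tᵀ)).trace := by simp only [Matrix.mul_assoc]
  have htrT : Matrix.trace (T * Tᵀ) = Matrix.trace (Tᵀ * T) := Matrix.trace_mul_comm T Tᵀ
  calc Matrix.trace (T * Tᵀ) = Matrix.trace (Tᵀ * T * Pp) + Matrix.trace (B * A⁻¹ * Bᵀ) := by
        rw [htrT, hdecomp]
    _ ≤ Real.sqrt (frobSq (Tᵀ * T)) * Real.sqrt (frobSq Pp) + 2 * frobSq B := by
        linarith
    _ = Real.sqrt ((Fintype.card γ : ℝ) - Fintype.card α) * Real.sqrt (frobSq (T * Tᵀ))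
        + 2 * frobSq B := by
        rw [hfrobT, hfrobPi, mul_comm (Real.sqrt (frobSq (T * Tᵀ)))]

end core2

section main
variable {n r s : ℕ}

abbrev headT (n s : ℕ) := {i : Fin n // (i : ℕ) < s}
abbrev tailT (n s : ℕ) := {i : Fin n // s ≤ (i : ℕ)}

def HmD (s : ℕ) (P : Matrix (Fin n) (Fin r) ℝ) : Matrix (headT n s) (Fin r) ℝ :=
  Matrix.of fun i a => P i.1 a

def TmD (s : ℕ) (P : Matrix (Fin n) (Fin r) ℝ) : Matrix (tailT n s) (Fin r) ℝ :=
  Matrix.of fun j a => P j.1 a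

def tauD (s : ℕ) (P : Matrix (Fin n) (Fin r) ℝ) : ℝ :=
  Matrix.trace (TmD s P * (TmD s P)ᵀ)

def hsqD (s : ℕ) (P : Matrix (Fin n) (Fin r) ℝ) : ℝ :=
  frobSq (HmD s P * (HmD s P)ᵀ - 1) + frobSq (TmD s P * (HmD s P)ᵀ)

def WsqD (s : ℕ) (P : Matrix (Fin n) (Fin r) ℝ) : ℝ :=
  frobSq (TmD s P * (TmD s P)ᵀ)

def asqD (s : ℕ) (P : Matrix (Fin n) (Fin r) ℝ) : ℝ :=
  frobSq (TmD s P * (TmD s P)ᵀ - 1)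

lemma card_headT (hsn : s ≤ n) : Fintype.card (headT n s) = s := by
  have e : headT n s ≃ Fin s :=
    { toFun := fun x => ⟨x.1.1, x.2⟩
      invFun := fun j => ⟨⟨j.1, lt_of_lt_of_le j.2 hsn⟩, j.2⟩
      left_inv := fun x => by ext; rfl
      right_inv := fun j => rfl }
  rw [Fintype.card_congr e, Fintype.card_fin]

lemma card_tailT (hsn : s ≤ n) : Fintype.card (tailT n s) = n - s := by
  have e : tailT n s ≃ Fin (n - s) :=
    { toFun := fun x => ⟨x.1.1 - s, by omega⟩
      invFun := fun j => ⟨⟨j.1 + s, by omega⟩, Nat.le_add_left s j.1⟩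
      left_inv := fun x => by
        ext
        have := x.2
        simp only []
        omega
      right_inv := fun j => by
        ext
        simp }
  rw [Fintype.card_congr e, Fintype.card_fin]

lemma frobSq_sub_one {β : Type*} [Fintype β] [DecidableEq β] (C : Matrix β β ℝ) :
    frobSq (C - 1) = frobSq C - 2 * Matrix.trace C + Fintype.card β := by
  have h : ∀ i j : β, ((C - 1) i j)^2
      = C i j^2 - 2*(if i = j then C i j else 0) + (if i = j then (1:ℝ) else 0) := by
    intro i j
    simp only [Matrix.sub_apply, Matrix.one_apply]
    split_ifs <;> ring
  have h2 : ∀ i : β, ∑ j, ((C - 1) i j)^2 = (∑ j, C i j^2) - 2*C i i + 1 := by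
    intro i
    rw [Finset.sum_congr rfl (fun j _ => h i j), Finset.sum_add_distrib,
      Finset.sum_sub_distrib, ← Finset.mul_sum, Finset.sum_ite_eq, Finset.sum_ite_eq]
    simp
  rw [frobSq, Finset.sum_congr rfl (fun i _ => h2 i), Finset.sum_add_distrib,
    Finset.sum_sub_distrib, ← Finset.mul_sum]
  simp [frobSq, Matrix.trace, Matrix.diag, Finset.card_univ]

lemma trace_le_sqrt_card {β : Type*} [Fintype β] [DecidableEq β] (C : Matrix β β ℝ)
    (hdiag : ∀ i, 0 ≤ C i i) :
    Matrix.trace C ≤ Real.sqrt (Fintype.card β) * Real.sqrt (frobSq C) := by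
  have h1 : (Matrix.trace C)^2 ≤ (Fintype.card β : ℝ) * ∑ i, (C i i)^2 := by
    have := Finset.sum_mul_sq_le_sq_mul_sq Finset.univ (fun _ : β => (1:ℝ)) (fun i => C i i)
    simpa [Matrix.trace, Matrix.diag, Finset.card_univ] using this
  have h2 : (∑ i, (C i i)^2) ≤ frobSq C := by
    apply Finset.sum_le_sum
    intro i _
    exact Finset.single_le_sum (fun j _ => sq_nonneg (C i j)) (Finset.mem_univ i)
  calc Matrix.trace C ≤ Real.sqrt ((Matrix.trace C)^2) := by
        rw [Real.sqrt_sq_eq_abs]; exact le_abs_self _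
    _ ≤ Real.sqrt ((Fintype.card β : ℝ) * frobSq C) := by
        apply Real.sqrt_le_sqrt
        refine h1.trans ?_
        exact mul_le_mul_of_nonneg_left h2 (Nat.cast_nonneg _)
    _ = Real.sqrt (Fintype.card β) * Real.sqrt (frobSq C) :=
        Real.sqrt_mul (Nat.cast_nonneg _) _

lemma sqrt_le_lam (w l : ℝ) (hw : 0 ≤ w) (hl : 0 < l) :
    Real.sqrt w ≤ (l * w + 1/l) / 2 := by
  have key := sq_nonneg (l * Real.sqrt w - 1)
  have hsq : (Real.sqrt w)^2 = w := Real.sq_sqrt hw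
  rw [le_div_iff₀ (by norm_num : (0:ℝ) < 2)]
  rw [← mul_le_mul_iff_left₀ hl]
  have hinv : 1/l * l = 1 := one_div_mul_cancel hl.ne'
  have h3 : 0 ≤ l^2*w - 2*(l*Real.sqrt w) + 1 := by nlinarith [key, hsq]
  nlinarith [h3, hinv]

lemma G_symm (P : Matrix (Fin n) (Fin r) ℝ) (i j : Fin n) : (P * Pᵀ) j i = (P * Pᵀ) i j := by
  simp [Matrix.mul_apply, mul_comm]

lemma TT_apply (P : Matrix (Fin n) (Fin r) ℝ) (i j : tailT n s) :
    (TmD s P * (TmD s P)ᵀ) i j = (P * Pᵀ) i.1 j.1 := by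
  simp [TmD, Matrix.mul_apply]

lemma HH_apply (P : Matrix (Fin n) (Fin r) ℝ) (i j : headT n s) :
    (HmD s P * (HmD s P)ᵀ) i j = (P * Pᵀ) i.1 j.1 := by
  simp [HmD, Matrix.mul_apply]

lemma TH_apply (P : Matrix (Fin n) (Fin r) ℝ) (i : tailT n s) (j : headT n s) :
    (TmD s P * (HmD s P)ᵀ) i j = (P * Pᵀ) i.1 j.1 := by
  simp [TmD, HmD, Matrix.mul_apply]

lemma tauD_eq (P : Matrix (Fin n) (Fin r) ℝ) :
    tauD s P = ∑ j : tailT n s, (P * Pᵀ) j.1 j.1 := by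
  rw [tauD, Matrix.trace]
  exact Finset.sum_congr rfl fun j _ => TT_apply P j j

lemma G_diag_nonneg (P : Matrix (Fin n) (Fin r) ℝ) (i : Fin n) : 0 ≤ (P * Pᵀ) i i := by
  simp only [Matrix.mul_apply, Matrix.transpose_apply]
  exact Finset.sum_nonneg fun a _ => mul_self_nonneg _

lemma tauD_nonneg (P : Matrix (Fin n) (Fin r) ℝ) : 0 ≤ tauD s P := by
  rw [tauD_eq]
  exact Finset.sum_nonneg fun j _ => G_diag_nonneg P j.1

lemma WsqD_eq (P : Matrix (Fin n) (Fin r) ℝ) :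
    asqD s P = WsqD s P - 2 * tauD s P + Fintype.card (tailT n s) := by
  rw [asqD, frobSq_sub_one, WsqD, tauD]

lemma tauD_le (P : Matrix (Fin n) (Fin r) ℝ) :
    tauD s P ≤ Real.sqrt (Fintype.card (tailT n s)) * Real.sqrt (WsqD s P) := by
  rw [tauD, WsqD]
  exact trace_le_sqrt_card _ (fun i => by rw [TT_apply]; exact G_diag_nonneg P i.1)

lemma tauD_det (P : Matrix (Fin n) (Fin r) ℝ) (h : hsqD s P ≤ 1/4) :
    tauD s P ≤ Real.sqrt ((Fintype.card (Fin r) : ℝ) - Fintype.card (headT n s)) *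
      Real.sqrt (WsqD s P) + 2 * frobSq (TmD s P * (HmD s P)ᵀ) := by
  rw [tauD, WsqD]
  exact det_core (HmD s P) (TmD s P) h

lemma entry_eq (σ : Fin n → ℝ) (P : Matrix (Fin n) (Fin r) ℝ) (i j : Fin n) :
    (Matrix.diagonal σ * P * Pᵀ - Matrix.diagonal σ) i j
      = σ i * ((P * Pᵀ) i j - if i = j then 1 else 0) := by
  rw [Matrix.mul_assoc, Matrix.sub_apply, Matrix.diagonal_mul, Matrix.diagonal_apply]
  split_ifs <;> ring

lemma F_split (hsn : s ≤ n) (σ : Fin n → ℝ) (M t : ℝ)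
    (hσh : ∀ i : Fin n, (i : ℕ) < s → σ i = M) (hσt : ∀ i : Fin n, s ≤ (i : ℕ) → σ i = t)
    (P : Matrix (Fin n) (Fin r) ℝ) :
    M^2 * hsqD s P + t^2 * asqD s P
      ≤ frobSq (Matrix.diagonal σ * P * Pᵀ - Matrix.diagonal σ) := by
  classical
  set G := P * Pᵀ with hG
  set D : Fin n → Fin n → ℝ := fun i j => (G i j - if i = j then 1 else 0)^2 with hD
  have hDval : ∀ i j, D i j = (G i j - if i = j then 1 else 0)^2 := fun i j => rfl
  have hDnn : ∀ i j, 0 ≤ D i j := fun i j => sq_nonneg _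
  set p : Fin n → Prop := fun i => (i : ℕ) < s with hp
  set q' : Fin n → Prop := fun i => s ≤ (i : ℕ) with hq'
  have hiffp : ∀ x : Fin n, x ∈ Finset.univ.filter p ↔ p x := by intro x; simp
  have hiffq : ∀ x : Fin n, x ∈ Finset.univ.filter (fun i => ¬ p i) ↔ q' x := by
    intro x; simp [hp, hq', not_lt]
  have hF : frobSq (Matrix.diagonal σ * P * Pᵀ - Matrix.diagonal σ)
      = ∑ i, σ i ^ 2 * ∑ j, D i j := by
    rw [frobSq]
    refine Finset.sum_congr rfl fun i _ => ?_
    rw [Finset.mul_sum]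
    refine Finset.sum_congr rfl fun j _ => ?_
    rw [entry_eq σ P i j, mul_pow, hDval]
  have hsplit : (∑ i, σ i ^ 2 * ∑ j, D i j)
      = (∑ i ∈ Finset.univ.filter p, σ i ^ 2 * ∑ j, D i j)
        + ∑ i ∈ Finset.univ.filter (fun i => ¬ p i), σ i ^ 2 * ∑ j, D i j :=
    (Finset.sum_filter_add_sum_filter_not _ _ _).symm
  have hhead : (∑ i ∈ Finset.univ.filter p, σ i ^ 2 * ∑ j, D i j)
      = M^2 * ∑ i ∈ Finset.univ.filter p, ∑ j, D i j := by
    rw [Finset.mul_sum]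
    refine Finset.sum_congr rfl fun i hi => ?_
    rw [hσh i ((hiffp i).mp hi)]
  have hsub : ∀ i : Fin n, (∑ j, D i j)
      = (∑ j ∈ Finset.univ.filter p, D i j)
        + ∑ j ∈ Finset.univ.filter (fun j => ¬ p j), D i j :=
    fun i => (Finset.sum_filter_add_sum_filter_not _ _ _).symm
  have h1 : frobSq (HmD s P * (HmD s P)ᵀ - 1)
      = ∑ i ∈ Finset.univ.filter p, ∑ j ∈ Finset.univ.filter p, D i j := by
    rw [frobSq, Finset.sum_subtype (p := p) _ hiffp
      (fun i => ∑ j ∈ Finset.univ.filter p, D i j)]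
    refine Finset.sum_congr rfl fun i _ => ?_
    rw [Finset.sum_subtype (p := p) _ hiffp (fun j => D i.1 j)]
    refine Finset.sum_congr rfl fun j _ => ?_
    rw [Matrix.sub_apply, Matrix.one_apply, HH_apply, hDval]
    congr 2
    by_cases hij : i = j
    · simp [hij]
    · rw [if_neg hij, if_neg (fun hv => hij (Subtype.ext hv))]
  have h2 : frobSq (TmD s P * (HmD s P)ᵀ)
      = ∑ i ∈ Finset.univ.filter p, ∑ j ∈ Finset.univ.filter (fun j => ¬ p j), D i j := by
    rw [frobSq, Finset.sum_comm]
    rw [Finset.sum_subtype (p := p) _ hiffp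
      (fun i => ∑ j ∈ Finset.univ.filter (fun j => ¬ p j), D i j)]
    refine Finset.sum_congr rfl fun i _ => ?_
    rw [Finset.sum_subtype (p := q') _ hiffq (fun j => D i.1 j)]
    refine Finset.sum_congr rfl fun j _ => ?_
    rw [TH_apply, hDval]
    have hne : (i.1 : Fin n) ≠ j.1 := by
      intro hij
      have h1 := i.2
      have h2 := j.2
      rw [hij] at h1
      omega
    rw [if_neg hne, G_symm]
    ring
  have hheadsq : hsqD s P = ∑ i ∈ Finset.univ.filter p, ∑ j, D i j := by
    rw [hsqD, h1, h2, ← Finset.sum_add_distrib]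
    exact Finset.sum_congr rfl fun i _ => (hsub i).symm
  have hasq : asqD s P = ∑ i ∈ Finset.univ.filter (fun i => ¬ p i),
      ∑ j ∈ Finset.univ.filter (fun j => ¬ p j), D i j := by
    rw [asqD, frobSq]
    rw [Finset.sum_subtype (p := q') _ hiffq
      (fun i => ∑ j ∈ Finset.univ.filter (fun j => ¬ p j), D i j)]
    refine Finset.sum_congr rfl fun i _ => ?_
    rw [Finset.sum_subtype (p := q') _ hiffq (fun j => D i.1 j)]
    refine Finset.sum_congr rfl fun j _ => ?_
    rw [Matrix.sub_apply, Matrix.one_apply, TT_apply, hDval]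
    congr 2
    by_cases hij : i = j
    · simp [hij]
    · rw [if_neg hij, if_neg (fun hv => hij (Subtype.ext hv))]
  have htail : t^2 * asqD s P
      ≤ ∑ i ∈ Finset.univ.filter (fun i => ¬ p i), σ i ^ 2 * ∑ j, D i j := by
    have htail1 : ∀ i ∈ Finset.univ.filter (fun i => ¬ p i),
        σ i ^ 2 * ∑ j, D i j = t^2 * ∑ j, D i j := by
      intro i hi
      rw [hσt i ((hiffq i).mp hi)]
    rw [Finset.sum_congr rfl htail1, ← Finset.mul_sum]
    apply mul_le_mul_of_nonneg_left _ (sq_nonneg t)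
    rw [hasq]
    refine Finset.sum_le_sum fun i _ => ?_
    exact Finset.sum_le_sum_of_subset_of_nonneg (Finset.filter_subset _ _)
      (fun j _ _ => hDnn i j)
  rw [hF, hsplit, hheadsq]
  linarith [htail]

lemma endgame (mR kR q t B V ItS ItSc Ihsq Iind eps u sqm B0 C1 : ℝ)
    (hmR : 0 < mR) (hkR : 0 < kR) (hkm : kR < mR) (hq : 0 < q) (heps : 0 < eps)
    (hsqm : sqm^2 = mR) (hsqm0 : 0 ≤ sqm)
    (ht2 : t^2 = q/mR)
    (hu : 1 ≤ u)
    (hB0 : B0 = (mR/kR - 1)*q)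
    (hC1 : C1 = sqm*(mR^2/kR + 4*B0)/2)
    (huM : q*(2*C1+4*B0) ≤ kR*eps*u)
    (ha : ItS + ItSc = mR)
    (hb : ItSc ≤ (sqm/(2*u))*V + (sqm*u/2)*Iind)
    (hc : ItS ≤ (kR/(2*mR))*V + mR/2 + 2*Ihsq)
    (hd : Iind ≤ 4*Ihsq)
    (he : Ihsq*u^4 ≤ B)
    (hf : t^2*(V - mR) ≤ B)
    (hIh0 : 0 ≤ Ihsq) :
    B0 - eps ≤ B := by
  have hu0 : 0 < u := lt_of_lt_of_le one_pos hu
  have hu4 : u ≤ u^4 := by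
    simpa using pow_le_pow_right₀ hu (by norm_num : 1 ≤ 4)
  have hu40 : (0:ℝ) < u^4 := by positivity
  have he2 : t^2*(mR^2/kR - mR) = B0 := by
    rw [ht2, hB0]; field_simp
  by_cases hcase1 : B0 ≤ B
  · linarith
  push_neg at hcase1
  by_cases hcase2 : mR^2/kR ≤ V
  · have h1 : t^2*(mR^2/kR - mR) ≤ t^2*(V - mR) :=
      mul_le_mul_of_nonneg_left (by linarith) (sq_nonneg t)
    linarith
  push_neg at hcase2
  have hB0pos : 0 < B0 := by
    rw [hB0]
    apply mul_pos _ hq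
    have h2 : 1 < mR/kR := (one_lt_div hkR).mpr hkm
    linarith
  have hIh2 : Ihsq ≤ B0/u^4 := by
    rw [le_div_iff₀ hu40]; linarith
  have hIh3 : Ihsq ≤ B0/u := by
    refine hIh2.trans (div_le_div_of_nonneg_left hB0pos.le hu0 hu4)
  have hIi2 : Iind ≤ 4*(B0/u^4) := by linarith
  have hVlb : 0 ≤ mR^2/kR - V → True := fun _ => trivial
  -- bound ItSc
  have hmono1 : (sqm/(2*u))*V ≤ (sqm/(2*u))*(mR^2/kR) :=
    mul_le_mul_of_nonneg_left hcase2.le (by positivity)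
  have hmono2 : (sqm*u/2)*Iind ≤ (sqm*u/2)*(4*(B0/u^4)) :=
    mul_le_mul_of_nonneg_left hIi2 (by positivity)
  have hScBound : ItSc ≤ C1/u := by
    have hh : (sqm/(2*u))*(mR^2/kR) + (sqm*u/2)*(4*(B0/u^4)) ≤ C1/u := by
      rw [hC1]
      have e1 : (sqm/(2*u))*(mR^2/kR) = sqm*(mR^2/kR)/2/u := by ring
      have e2 : (sqm*u/2)*(4*(B0/u^4)) = 2*sqm*B0/u^3 := by
        field_simp; ring
      have e3 : 2*sqm*B0/u^3 ≤ 2*sqm*B0/u := by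
        apply div_le_div_of_nonneg_left (by positivity) hu0
        simpa using pow_le_pow_right₀ hu (by norm_num : 1 ≤ 3)
      rw [e1, e2]
      have e4 : sqm*(mR^2/kR + 4*B0)/2/u = sqm*(mR^2/kR)/2/u + 2*sqm*B0/u := by
        field_simp
        ring
      linarith
    linarith
  -- bound V from below
  have hSlb : mR - C1/u ≤ ItS := by linarith
  have hVlb2 : mR/2 - (C1 + 2*B0)/u ≤ (kR/(2*mR))*V := by
    have : (C1 + 2*B0)/u = C1/u + 2*(B0/u) := by field_simp
    linarith
  have hcpos : (0:ℝ) < kR/(2*mR) := by positivity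
  have hVlb3 : (mR/2 - (C1 + 2*B0)/u)/(kR/(2*mR)) ≤ V := by
    rw [div_le_iff₀ hcpos]; linarith [hVlb2]
  have hVexp : (mR/2 - (C1 + 2*B0)/u)/(kR/(2*mR)) =
      mR^2/kR - (2*mR/kR)*((C1+2*B0)/u) := by
    field_simp
  have hBlb : t^2*(mR^2/kR - (2*mR/kR)*((C1+2*B0)/u) - mR) ≤ B := by
    refine le_trans ?_ hf
    apply mul_le_mul_of_nonneg_left _ (sq_nonneg t)
    rw [← hVexp]; linarith [hVlb3]
  have herr : t^2*((2*mR/kR)*((C1+2*B0)/u)) ≤ eps := by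
    rw [ht2]
    have e5 : q/mR*((2*mR/kR)*((C1+2*B0)/u)) = q*(2*C1+4*B0)/(kR*u) := by
      field_simp; ring
    rw [e5]
    rw [div_le_iff₀ (by positivity)]
    calc q*(2*C1+4*B0) ≤ kR*eps*u := huM
      _ = eps*(kR*u) := by ring
  have hfinal : t^2*(mR^2/kR - (2*mR/kR)*((C1+2*B0)/u) - mR)
      = B0 - t^2*((2*mR/kR)*((C1+2*B0)/u)) := by
    rw [← he2]; ring
  linarith [hBlb, herr, hfinal.symm.le, hfinal.le]

lemma meas_entry (i : Fin n) (j : Fin r) :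
    Measurable fun P : Matrix (Fin n) (Fin r) ℝ => P i j :=
  (measurable_pi_apply j).comp (measurable_pi_apply i)

lemma meas_G (i j : Fin n) :
    Measurable fun P : Matrix (Fin n) (Fin r) ℝ => (P * Pᵀ) i j := by
  simp only [Matrix.mul_apply, Matrix.transpose_apply]
  exact Finset.measurable_sum _ fun a _ => (meas_entry i a).mul (meas_entry j a)

lemma meas_hsqD : Measurable fun P : Matrix (Fin n) (Fin r) ℝ => hsqD s P := by
  have h1 : (fun P : Matrix (Fin n) (Fin r) ℝ => hsqD s P)
      = fun P => (∑ i : headT n s, ∑ j : headT n s,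
          ((P*Pᵀ) i.1 j.1 - if i = j then (1:ℝ) else 0)^2)
        + ∑ i : tailT n s, ∑ j : headT n s, ((P*Pᵀ) i.1 j.1)^2 := by
    funext P
    rw [hsqD, frobSq, frobSq]
    simp only [Matrix.sub_apply, Matrix.one_apply, HH_apply, TH_apply]
  rw [h1]
  apply Measurable.add
  · exact Finset.measurable_sum _ fun i _ => Finset.measurable_sum _ fun j _ =>
      ((meas_G i.1 j.1).sub measurable_const).pow_const 2
  · exact Finset.measurable_sum _ fun i _ => Finset.measurable_sum _ fun j _ =>
      (meas_G i.1 j.1).pow_const 2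

lemma meas_tauD : Measurable fun P : Matrix (Fin n) (Fin r) ℝ => tauD s P := by
  have h1 : (fun P : Matrix (Fin n) (Fin r) ℝ => tauD s P)
      = fun P => ∑ j : tailT n s, (P * Pᵀ) j.1 j.1 := funext fun P => tauD_eq P
  rw [h1]
  exact Finset.measurable_sum _ fun j _ => meas_G j.1 j.1

lemma meas_asqD : Measurable fun P : Matrix (Fin n) (Fin r) ℝ => asqD s P := by
  have h1 : (fun P : Matrix (Fin n) (Fin r) ℝ => asqD s P)
      = fun P => ∑ i : tailT n s, ∑ j : tailT n s,
          ((P*Pᵀ) i.1 j.1 - if i = j then (1:ℝ) else 0)^2 := by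
    funext P
    rw [asqD, frobSq]
    refine Finset.sum_congr rfl fun i _ => Finset.sum_congr rfl fun j _ => ?_
    rw [Matrix.sub_apply, Matrix.one_apply, TT_apply]
  rw [h1]
  exact Finset.measurable_sum _ fun i _ => Finset.measurable_sum _ fun j _ =>
    ((meas_G i.1 j.1).sub measurable_const).pow_const 2

lemma meas_WsqD : Measurable fun P : Matrix (Fin n) (Fin r) ℝ => WsqD s P := by
  have h1 : (fun P : Matrix (Fin n) (Fin r) ℝ => WsqD s P)
      = fun P => ∑ i : tailT n s, ∑ j : tailT n s, ((P*Pᵀ) i.1 j.1)^2 := by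
    funext P
    rw [WsqD, frobSq]
    refine Finset.sum_congr rfl fun i _ => Finset.sum_congr rfl fun j _ => ?_
    rw [TT_apply]
  rw [h1]
  exact Finset.measurable_sum _ fun i _ => Finset.measurable_sum _ fun j _ =>
    (meas_G i.1 j.1).pow_const 2

lemma entry_mul (σ : Fin n → ℝ) (P : Matrix (Fin n) (Fin r) ℝ) (i j : Fin n) :
    (Matrix.diagonal σ * P * Pᵀ) i j = σ i * (P * Pᵀ) i j := by
  rw [Matrix.mul_assoc, Matrix.diagonal_mul]

end main

lemma bound_div (a b c : ℝ) (hb : 0 < b) (ha : 0 ≤ a) (h : b*a ≤ c) : ‖a‖ ≤ 1/b*c := by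
  rw [Real.norm_eq_abs, abs_of_nonneg ha]
  rw [one_div, inv_mul_eq_div, le_div_iff₀ hb]
  linarith [h, mul_comm b a, (mul_comm a b).le]

set_option maxHeartbeats 2000000 in
/-- Lower bound for unbiased subspace compression: over diagonal matrices
`X = diag(σ₁,…,σₙ)` with decreasing positive entries whose tail energy
`Σ_{i>s} σᵢ²` is at most `q`, the minimax quantity `sup_X inf_P E[‖XPPᵀ − X‖_F²]`
(the infimum being over all distributions of `P` with `E[XPPᵀ] = X`) is at least
`((n−s)/(r−s) − 1)·q`.  Stated via the ε-characterization of the supremum. -/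
theorem minimax_lower_bound {n r s : ℕ} (hs : s < r) (hr : r < n) (q : ℝ) (hq : 0 < q) :
    ∀ ε > (0 : ℝ), ∃ σ : Fin n → ℝ,
      (Antitone σ ∧ (∀ i, 0 < σ i) ∧
        ∑ i ∈ Finset.univ.filter (fun i : Fin n => s ≤ (i : ℕ)), σ i ^ 2 ≤ q) ∧
      ∀ π : Measure (Matrix (Fin n) (Fin r) ℝ), IsProbabilityMeasure π →
        (∀ i j, Integrable
          (fun P => (Matrix.diagonal σ * P * Pᵀ) i j) π) →
        Integrable
          (fun P => frobSq (Matrix.diagonal σ * P * Pᵀ - Matrix.diagonal σ)) π →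
        -- unbiasedness condition `E[XPPᵀ] = X`
        (∀ i j, ∫ P, (Matrix.diagonal σ * P * Pᵀ) i j ∂π = Matrix.diagonal σ i j) →
        (((n : ℝ) - s) / ((r : ℝ) - s) - 1) * q - ε ≤
          ∫ P, frobSq (Matrix.diagonal σ * P * Pᵀ - Matrix.diagonal σ) ∂π := by
  intro ε hε
  classical
  have hsn : s ≤ n := by omega
  have hsr : s ≤ r := by omega
  set mR : ℝ := (n : ℝ) - s with hmRdef
  set kR : ℝ := (r : ℝ) - s with hkRdef
  have hsnR : (s : ℝ) < n := by exact_mod_cast lt_trans hs hr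
  have hsrR : (s : ℝ) < r := by exact_mod_cast hs
  have hrnR : (r : ℝ) < n := by exact_mod_cast hr
  have hmR : 0 < mR := by rw [hmRdef]; linarith
  have hkR : 0 < kR := by rw [hkRdef]; linarith
  have hkm : kR < mR := by rw [hkRdef, hmRdef]; linarith
  set t : ℝ := Real.sqrt (q/mR) with htdef
  have ht : 0 < t := Real.sqrt_pos.mpr (by positivity)
  have ht2 : t^2 = q/mR := Real.sq_sqrt (by positivity)
  set B0 : ℝ := (mR/kR - 1)*q with hB0def
  set sqm : ℝ := Real.sqrt mR with hsqmdef
  have hsqm : sqm^2 = mR := Real.sq_sqrt hmR.le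
  have hsqm0 : 0 ≤ sqm := Real.sqrt_nonneg _
  set sqk : ℝ := Real.sqrt kR with hsqkdef
  have hsqk : sqk^2 = kR := Real.sq_sqrt hkR.le
  have hsqk0 : 0 < sqk := Real.sqrt_pos.mpr hkR
  set C1 : ℝ := sqm*(mR^2/kR + 4*B0)/2 with hC1def
  set u : ℝ := max (max 1 t) (q*(2*C1+4*B0)/(kR*ε)) with hudef
  have hu1 : 1 ≤ u := le_trans (le_max_left 1 t) (le_max_left _ _)
  have hut : t ≤ u := le_trans (le_max_right 1 t) (le_max_left _ _)
  have hu0 : 0 < u := lt_of_lt_of_le one_pos hu1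
  have huM : q*(2*C1+4*B0) ≤ kR*ε*u := by
    have h1 : q*(2*C1+4*B0)/(kR*ε) ≤ u := le_max_right _ _
    rw [div_le_iff₀ (by positivity)] at h1
    linarith
  set Mv : ℝ := u^2 with hMvdef
  have hMt : t ≤ Mv := by nlinarith
  have hMpos : 0 < Mv := by positivity
  set σv : Fin n → ℝ := fun i => if (i : ℕ) < s then Mv else t with hσvdef
  have hσh : ∀ i : Fin n, (i : ℕ) < s → σv i = Mv := by
    intro i h; simp [hσvdef, h]
  have hσt : ∀ i : Fin n, s ≤ (i : ℕ) → σv i = t := by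
    intro i h; simp [hσvdef, Nat.not_lt.mpr h]
  have hcardtail : ((Fintype.card (tailT n s) : ℝ)) = mR := by
    rw [card_tailT hsn, hmRdef]
    push_cast [Nat.cast_sub hsn]
    ring
  refine ⟨σv, ⟨?_, ?_, ?_⟩, ?_⟩
  · -- Antitone
    intro i j hij
    have hijn : (i : ℕ) ≤ (j : ℕ) := hij
    by_cases hj : (j : ℕ) < s
    · have hi : (i : ℕ) < s := lt_of_le_of_lt hijn hj
      simp [hσvdef, hi, hj]
    · by_cases hi : (i : ℕ) < s
      · simp [hσvdef, hi, hj, hMt]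
      · simp [hσvdef, hi, hj]
  · -- positivity
    intro i
    by_cases hi : (i : ℕ) < s
    · simp [hσvdef, hi, hMpos]
    · simp [hσvdef, hi, ht]
  · -- tail sum
    have h1 : ∀ i ∈ Finset.univ.filter (fun i : Fin n => s ≤ (i : ℕ)), σv i ^ 2 = t^2 := by
      intro i hi
      rw [hσt i (by simpa using (Finset.mem_filter.mp hi).2)]
    rw [Finset.sum_congr rfl h1, Finset.sum_const]
    have hcard2 : (Finset.univ.filter (fun i : Fin n => s ≤ (i : ℕ))).card
        = Fintype.card (tailT n s) := (Fintype.card_subtype _).symm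
    rw [hcard2, nsmul_eq_mul]
    rw [ht2]
    rw [hcardtail]
    rw [mul_div_cancel₀ _ hmR.ne']
  · -- main probabilistic bound
    intro π hπ hint1 hint2 hunb
    set F : Matrix (Fin n) (Fin r) ℝ → ℝ :=
      fun P => frobSq (Matrix.diagonal σv * P * Pᵀ - Matrix.diagonal σv) with hFdef
    set B : ℝ := ∫ P, F P ∂π with hBdef
    -- integrability of the tail diagonal entries
    have hGe : ∀ j : tailT n s, (fun P : Matrix (Fin n) (Fin r) ℝ => (P * Pᵀ) j.1 j.1)
        = fun P => (1/t) * ((Matrix.diagonal σv * P * Pᵀ) j.1 j.1) := by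
      intro j
      funext P
      rw [entry_mul, hσt j.1 j.2]
      field_simp
    have hGint : ∀ j : tailT n s, Integrable (fun P => (P * Pᵀ) j.1 j.1) π := by
      intro j
      rw [hGe j]
      exact (hint1 j.1 j.1).const_mul _
    have hGmean : ∀ j : tailT n s, ∫ P, (P * Pᵀ) j.1 j.1 ∂π = 1 := by
      intro j
      rw [hGe j, integral_const_mul, hunb j.1 j.1, Matrix.diagonal_apply_eq, hσt j.1 j.2]
      field_simp
    have htau_eqf : (fun P : Matrix (Fin n) (Fin r) ℝ => tauD s P)
        = fun P => ∑ j : tailT n s, (P * Pᵀ) j.1 j.1 := funext fun P => tauD_eq P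
    have int_tau : Integrable (fun P => tauD s P) π := by
      rw [htau_eqf]
      exact integrable_finset_sum _ fun j _ => hGint j
    have mean_tau : ∫ P, tauD s P ∂π = mR := by
      rw [htau_eqf, integral_finset_sum _ fun j _ => hGint j]
      rw [Finset.sum_congr rfl fun j _ => hGmean j, Finset.sum_const, nsmul_eq_mul]
      rw [Finset.card_univ, mul_one, hcardtail]
    have int_F : Integrable F π := hint2
    have hBnn : 0 ≤ B := integral_nonneg fun P => frobSq_nonneg _
    have pbF : ∀ P, Mv^2*hsqD s P + t^2*asqD s P ≤ F P := fun P =>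
      F_split hsn σv Mv t hσh hσt P
    have hsq_nn : ∀ P : Matrix (Fin n) (Fin r) ℝ, 0 ≤ hsqD s P := fun P =>
      add_nonneg (frobSq_nonneg _) (frobSq_nonneg _)
    have asq_nn : ∀ P : Matrix (Fin n) (Fin r) ℝ, 0 ≤ asqD s P := fun P => frobSq_nonneg _
    have Wsq_nn : ∀ P : Matrix (Fin n) (Fin r) ℝ, 0 ≤ WsqD s P := fun P => frobSq_nonneg _
    have int_hsq : Integrable (fun P => hsqD s P) π := by
      refine Integrable.mono' (int_F.const_mul (1/Mv^2))
        meas_hsqD.aestronglyMeasurable (Filter.Eventually.of_forall fun P =>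
          bound_div _ _ _ (pow_pos hMpos 2) (hsq_nn P) ?_)
      linarith [pbF P, mul_nonneg (sq_nonneg t) (asq_nn P)]
    have int_asq : Integrable (fun P => asqD s P) π := by
      refine Integrable.mono' (int_F.const_mul (1/t^2))
        meas_asqD.aestronglyMeasurable (Filter.Eventually.of_forall fun P =>
          bound_div _ _ _ (pow_pos ht 2) (asq_nn P) ?_)
      linarith [pbF P, mul_nonneg (sq_nonneg Mv) (hsq_nn P)]
    have hWsq_eqf : (fun P : Matrix (Fin n) (Fin r) ℝ => WsqD s P)
        = fun P => asqD s P + 2*tauD s P - mR := by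
      funext P
      have h1 := WsqD_eq (s := s) P
      rw [hcardtail] at h1
      linarith
    have int_Wsq : Integrable (fun P => WsqD s P) π := by
      rw [hWsq_eqf]
      exact (int_asq.add (int_tau.const_mul 2)).sub (integrable_const _)
    set V : ℝ := ∫ P, WsqD s P ∂π with hVdef
    have hIa : ∫ P, asqD s P ∂π = V - mR := by
      have intA : Integrable (fun P => asqD s P + 2*tauD s P) π :=
        int_asq.add (int_tau.const_mul 2)
      rw [hVdef, hWsq_eqf, integral_sub intA (integrable_const _),
        integral_add int_asq (int_tau.const_mul 2), integral_const_mul, mean_tau]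
      simp [measure_univ]
      ring
    -- indicator functions
    set tauS : Matrix (Fin n) (Fin r) ℝ → ℝ :=
      fun P => if hsqD s P ≤ 1/4 then tauD s P else 0 with htauSdef
    set tauSc : Matrix (Fin n) (Fin r) ℝ → ℝ :=
      fun P => if hsqD s P ≤ 1/4 then 0 else tauD s P with htauScdef
    set ind : Matrix (Fin n) (Fin r) ℝ → ℝ :=
      fun P => if hsqD s P ≤ 1/4 then 0 else 1 with hinddef
    have hSmeas : MeasurableSet {P : Matrix (Fin n) (Fin r) ℝ | hsqD s P ≤ 1/4} :=
      measurableSet_le meas_hsqD measurable_const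
    have meas_tauS : Measurable tauS := Measurable.ite hSmeas meas_tauD measurable_const
    have meas_tauSc : Measurable tauSc := Measurable.ite hSmeas measurable_const meas_tauD
    have meas_ind : Measurable ind := Measurable.ite hSmeas measurable_const measurable_const
    have tau_nn : ∀ P : Matrix (Fin n) (Fin r) ℝ, 0 ≤ tauD s P := fun P => tauD_nonneg P
    have int_tauS : Integrable tauS π := by
      refine int_tau.mono meas_tauS.aestronglyMeasurable (Filter.Eventually.of_forall fun P => ?_)
      rw [htauSdef]
      dsimp only
      split_ifs
      · exact le_rfl
      · simpa using norm_nonneg (tauD s P)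
    have int_tauSc : Integrable tauSc π := by
      refine int_tau.mono meas_tauSc.aestronglyMeasurable (Filter.Eventually.of_forall fun P => ?_)
      rw [htauScdef]
      dsimp only
      split_ifs
      · simpa using norm_nonneg (tauD s P)
      · exact le_rfl
    have int_ind : Integrable ind π := by
      refine Integrable.mono' (integrable_const 1)
        meas_ind.aestronglyMeasurable (Filter.Eventually.of_forall fun P => ?_)
      rw [hinddef]
      dsimp only
      split_ifs <;> simp
    set ItS : ℝ := ∫ P, tauS P ∂π with hItSdef
    set ItSc : ℝ := ∫ P, tauSc P ∂π with hItScdef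
    set Iind : ℝ := ∫ P, ind P ∂π with hIinddef
    set Ihsq : ℝ := ∫ P, hsqD s P ∂π with hIhsqdef
    have ha : ItS + ItSc = mR := by
      rw [hItSdef, hItScdef, ← integral_add int_tauS int_tauSc, ← mean_tau]
      apply integral_congr_ae
      refine Filter.Eventually.of_forall fun P => ?_
      rw [htauSdef, htauScdef]
      dsimp only
      split_ifs <;> ring
    -- pointwise bounds
    have pb1 : ∀ P, tauSc P ≤ (sqm/(2*u))*WsqD s P + (sqm*u/2)*ind P := by
      intro P
      rw [htauScdef, hinddef]
      dsimp only
      split_ifs with hP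
      · have h0 : 0 ≤ (sqm/(2*u))*WsqD s P :=
          mul_nonneg (by positivity) (Wsq_nn P)
        simpa using h0
      · have h1 := tauD_le (s := s) P
        rw [hcardtail, ← hsqmdef] at h1
        have h2 := sqrt_le_lam (WsqD s P) (1/u) (Wsq_nn P) (by positivity)
        rw [one_div_one_div] at h2
        have h3 : tauD s P ≤ sqm * ((1/u * WsqD s P + u)/2) :=
          h1.trans (mul_le_mul_of_nonneg_left h2 hsqm0)
        have e : ∀ w : ℝ, sqm * ((1/u * w + u)/2) = (sqm/(2*u))*w + sqm*u/2 := by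
          intro w
          field_simp
        rw [e (WsqD s P)] at h3
        linarith
    have pb2 : ∀ P, tauS P ≤ (kR/(2*mR))*WsqD s P + mR/2 + 2*hsqD s P := by
      intro P
      rw [htauSdef]
      dsimp only
      split_ifs with hP
      · have h1 := tauD_det (s := s) P hP
        have hcards : ((Fintype.card (Fin r) : ℝ)) - (Fintype.card (headT n s) : ℝ) = kR := by
          rw [Fintype.card_fin, card_headT hsn, hkRdef]
        rw [hcards, ← hsqkdef] at h1
        have hfr2 : frobSq (TmD s P * (HmD s P)ᵀ) ≤ hsqD s P := by
          rw [hsqD]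
          have := frobSq_nonneg (HmD s P * (HmD s P)ᵀ - 1)
          linarith
        have h2 := sqrt_le_lam (WsqD s P) (sqk/mR) (Wsq_nn P) (by positivity)
        have h2' : Real.sqrt (WsqD s P) ≤ (sqk/mR * WsqD s P + mR/sqk)/2 := by
          have e0 : 1/(sqk/mR) = mR/sqk := by field_simp
          rw [e0] at h2
          exact h2
        have h3 : sqk * Real.sqrt (WsqD s P) ≤ sqk * ((sqk/mR * WsqD s P + mR/sqk)/2) :=
          mul_le_mul_of_nonneg_left h2' hsqk0.le
        have e : ∀ w : ℝ, sqk * ((sqk/mR * w + mR/sqk)/2) = (kR/(2*mR))*w + mR/2 := by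
          intro w
          rw [← hsqk]
          field_simp [hsqk0.ne', hmR.ne']
        rw [e (WsqD s P)] at h3
        linarith
      · have h0 : 0 ≤ (kR/(2*mR))*WsqD s P :=
          mul_nonneg (by positivity) (Wsq_nn P)
        have := hsq_nn P
        linarith
    have pb3 : ∀ P, ind P ≤ 4*hsqD s P := by
      intro P
      rw [hinddef]
      dsimp only
      split_ifs with hP
      · have := hsq_nn P; linarith
      · rw [not_le] at hP; linarith
    -- integral bounds
    have hb : ItSc ≤ (sqm/(2*u))*V + (sqm*u/2)*Iind := by
      have intR : Integrable (fun P => (sqm/(2*u))*WsqD s P + (sqm*u/2)*ind P) π :=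
        (int_Wsq.const_mul _).add (int_ind.const_mul _)
      have h1 := integral_mono int_tauSc intR pb1
      rwa [integral_add (int_Wsq.const_mul _) (int_ind.const_mul _),
        integral_const_mul, integral_const_mul] at h1
    have hc : ItS ≤ (kR/(2*mR))*V + mR/2 + 2*Ihsq := by
      have intR1 : Integrable (fun P => (kR/(2*mR))*WsqD s P + mR/2) π :=
        (int_Wsq.const_mul _).add (integrable_const _)
      have intR : Integrable (fun P => ((kR/(2*mR))*WsqD s P + mR/2) + 2*hsqD s P) π :=
        intR1.add (int_hsq.const_mul 2)
      have h1 := integral_mono int_tauS intR pb2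
      rwa [integral_add intR1 (int_hsq.const_mul 2),
        integral_add (int_Wsq.const_mul _) (integrable_const _),
        integral_const_mul, integral_const_mul, integral_const,
        probReal_univ, one_smul] at h1
    have hd : Iind ≤ 4*Ihsq := by
      have h1 := integral_mono int_ind (int_hsq.const_mul 4) pb3
      rwa [integral_const_mul] at h1
    have he : Ihsq*u^4 ≤ B := by
      have h1 := integral_mono (int_hsq.const_mul (Mv^2)) int_F
        (fun P => by linarith [pbF P, mul_nonneg (sq_nonneg t) (asq_nn P)])
      rw [integral_const_mul] at h1
      have e : Mv^2 = u^4 := by rw [hMvdef]; ring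
      rw [e] at h1
      rw [mul_comm]
      exact h1
    have hf : t^2*(V - mR) ≤ B := by
      have h1 := integral_mono (int_asq.const_mul (t^2)) int_F
        (fun P => by linarith [pbF P, mul_nonneg (sq_nonneg Mv) (hsq_nn P)])
      rw [integral_const_mul, hIa] at h1
      exact h1
    have hIh0 : 0 ≤ Ihsq := integral_nonneg hsq_nn
    exact endgame mR kR q t B V ItS ItSc Ihsq Iind ε u sqm B0 C1 hmR hkR hkm hq hε
      hsqm hsqm0 ht2 hu1 hB0def hC1def huM ha hb hc hd he hf hIh0
end

section
/- Let Q₁ ∈ ℝ^{n×r₁} have orthonormal columns and let U ∈ ℝ^{n×(n−r₁)} be an orthonormal basis of the orthogonal complement of the column space of Q₁, so that Q₁Q₁ᵀ + UUᵀ = I_n. If Q₂ = UV where V ∈ ℝ^{(n−r₁)×r₂} is a random matrix with VᵀV = I_{r₂} and E[VVᵀ] = (r₂/(n−r₁))I_{n−r₁}, and k = (n−r₁)/r₂, then E[(UUᵀ − kQ₂Q₂ᵀ)²] = (k−1)·UUᵀ. -/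
open Matrix MeasureTheory

/-- The key matrix identity in the PRAC variance computation:
if `Q₁Q₁ᵀ + UUᵀ = I`, `Q₂ = UV` with `VᵀV = I` and `E[VVᵀ] = (r₂/(n−r₁))I`, and
`k = (n−r₁)/r₂`, then `E[(UUᵀ − kQ₂Q₂ᵀ)²] = (k−1)·UUᵀ`. -/
theorem prac_variance_key_identity {n r₁ r₂ : ℕ} (hr₁ : r₁ ≤ n) (hr₂pos : 0 < r₂)
    {Ω : Type*} [MeasurableSpace Ω] (μ : Measure Ω) [IsProbabilityMeasure μ]
    (Q₁ : Matrix (Fin n) (Fin r₁) ℝ) (hQ₁ : Q₁ᵀ * Q₁ = 1)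
    (U : Matrix (Fin n) (Fin (n - r₁)) ℝ) (hU : Uᵀ * U = 1)
    (hcompl : Q₁ * Q₁ᵀ + U * Uᵀ = 1)
    (V : Ω → Matrix (Fin (n - r₁)) (Fin r₂) ℝ)
    (hVV : ∀ ω, (V ω)ᵀ * V ω = 1)
    (hIntV : ∀ i j, Integrable (fun ω => (V ω * (V ω)ᵀ) i j) μ)
    (hEV : ∀ i j, ∫ ω, (V ω * (V ω)ᵀ) i j ∂μ =
      ((r₂ : ℝ) / ((n : ℝ) - r₁)) • (1 : Matrix (Fin (n - r₁)) (Fin (n - r₁)) ℝ) i j)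
    (Q₂ : Ω → Matrix (Fin n) (Fin r₂) ℝ) (hQ₂ : ∀ ω, Q₂ ω = U * V ω)
    (k : ℝ) (hk : k = ((n : ℝ) - r₁) / r₂) :
    ∀ i j, ∫ ω, ((U * Uᵀ - k • (Q₂ ω * (Q₂ ω)ᵀ)) *
        (U * Uᵀ - k • (Q₂ ω * (Q₂ ω)ᵀ))) i j ∂μ =
      (k - 1) * (U * Uᵀ) i j := by
  intro i j
  set A := U * Uᵀ with hA
  have hAA : A * A = A := by
    rw [hA, Matrix.mul_assoc, ← Matrix.mul_assoc Uᵀ U, hU, Matrix.one_mul]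
  have hQ : ∀ ω, Q₂ ω * (Q₂ ω)ᵀ = U * (V ω * (V ω)ᵀ) * Uᵀ := by
    intro ω
    rw [hQ₂, Matrix.transpose_mul]
    simp [Matrix.mul_assoc]
  have hAP : ∀ ω, A * (Q₂ ω * (Q₂ ω)ᵀ) = Q₂ ω * (Q₂ ω)ᵀ := by
    intro ω
    rw [hQ, hA]
    simp only [Matrix.mul_assoc]
    rw [← Matrix.mul_assoc Uᵀ U, hU, Matrix.one_mul]
  have hPA : ∀ ω, (Q₂ ω * (Q₂ ω)ᵀ) * A = Q₂ ω * (Q₂ ω)ᵀ := by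
    intro ω
    rw [hQ, hA]
    simp only [Matrix.mul_assoc]
    rw [← Matrix.mul_assoc Uᵀ U, hU, Matrix.one_mul]
  have hPP : ∀ ω, (Q₂ ω * (Q₂ ω)ᵀ) * (Q₂ ω * (Q₂ ω)ᵀ) = Q₂ ω * (Q₂ ω)ᵀ := by
    intro ω
    rw [hQ]
    simp only [Matrix.mul_assoc]
    rw [← Matrix.mul_assoc Uᵀ U, hU, Matrix.one_mul,
      ← Matrix.mul_assoc (V ω)ᵀ (V ω), hVV, Matrix.one_mul]
  have key : ∀ ω, (A - k • (Q₂ ω * (Q₂ ω)ᵀ)) * (A - k • (Q₂ ω * (Q₂ ω)ᵀ))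
      = A + (k ^ 2 - 2 * k) • (Q₂ ω * (Q₂ ω)ᵀ) := by
    intro ω
    simp only [sub_mul, mul_sub, smul_mul_assoc, Matrix.mul_smul, hAA, hAP, hPA, hPP]
    module
  -- entrywise formula for P
  have hPentry : ∀ ω, (Q₂ ω * (Q₂ ω)ᵀ) i j
      = ∑ a, ∑ b, U i a * (V ω * (V ω)ᵀ) a b * U j b := by
    intro ω
    rw [hQ]
    simp [Matrix.mul_apply, Matrix.transpose_apply, Finset.sum_mul, Finset.mul_sum]
    rw [Finset.sum_comm]
  have hIntP : Integrable (fun ω => (Q₂ ω * (Q₂ ω)ᵀ) i j) μ := by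
    simp only [hPentry]
    apply integrable_finset_sum
    intro a _
    apply integrable_finset_sum
    intro b _
    exact ((hIntV a b).const_mul (U i a)).mul_const (U j b)
  have hAij : A i j = ∑ a, U i a * U j a := by
    simp [hA, Matrix.mul_apply, Matrix.transpose_apply]
  have hIP : ∫ ω, (Q₂ ω * (Q₂ ω)ᵀ) i j ∂μ = ((r₂ : ℝ) / ((n : ℝ) - r₁)) * A i j := by
    simp only [hPentry]
    rw [integral_finset_sum _ (fun a _ => integrable_finset_sum _
      (fun b _ => ((hIntV a b).const_mul (U i a)).mul_const (U j b)))]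
    have : ∀ a, ∫ ω, ∑ b, U i a * (V ω * (V ω)ᵀ) a b * U j b ∂μ
        = ∑ b, U i a * (∫ ω, (V ω * (V ω)ᵀ) a b ∂μ) * U j b := by
      intro a
      rw [integral_finset_sum _ (fun b _ =>
        ((hIntV a b).const_mul (U i a)).mul_const (U j b))]
      congr 1
      ext b
      rw [MeasureTheory.integral_mul_const, MeasureTheory.integral_const_mul]
    simp only [this, hEV, Matrix.smul_apply, Matrix.one_apply, smul_eq_mul, hAij]
    rw [Finset.mul_sum]
    congr 1
    ext a
    simp [Finset.mul_sum, mul_ite, Finset.sum_ite_eq]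
    ring
  simp only [key, Matrix.add_apply, Matrix.smul_apply, smul_eq_mul]
  rw [integral_add (integrable_const _) (hIntP.const_mul _),
    integral_const, probReal_univ, one_smul,
    MeasureTheory.integral_const_mul, hIP]
  by_cases hN : (n : ℝ) - r₁ = 0
  · have hn : n - r₁ = 0 := by
      have : (n : ℝ) = r₁ := by linarith
      have : n = r₁ := by exact_mod_cast this
      omega
    have hA0 : A i j = 0 := by
      rw [hAij]
      apply Finset.sum_eq_zero
      intro a _
      exact absurd (a.2) (by omega)
    rw [hA0]
    ring
  · have hr₂ : (r₂ : ℝ) ≠ 0 := Nat.cast_ne_zero.mpr hr₂pos.ne'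
    have hkne : k ≠ 0 := by
      rw [hk]
      exact div_ne_zero hN hr₂
    rw [hk] at *
    field_simp
    ring
end
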